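/- Let V be a finite set, for each v ∈ V let X_v be a set, and let X ⊆ ∏_{v∈V} X_v. Let A, B, C, D ⊆ V and n, m ∈ ℕ. If x_A n-determines x_B and x_C m-determines x_D, then x_{(C \ B) ∪ A} nm-determines x_D. -/

import Mathlib

/-- `x_A` `d`-determines `x_B`: for every choice `c` of values on the coordinates in `A`,
the projection onto `B` of the set of elements of `S` agreeing with `c` on `A`
has at most `d` elements. -/
def Determines {V : Type*} {F : V → Type*} (S : Set (∀ v, F v))
    (A B : Set V) (d : ℕ) : Prop :=
  ∀ c : ∀ a : A, F a,
    ((fun x : ∀ v, F v => fun b : B => x b) ''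
      {x ∈ S | ∀ a : A, x a = c a}).encard ≤ (d : ℕ∞)

lemma encard_biUnion_le_aux {α β : Type*} {t : α → Set β} {m : ℕ∞}
    {s : Set α} (hs : s.Finite) :
    (∀ i ∈ s, (t i).encard ≤ m) → (⋃ i ∈ s, t i).encard ≤ s.encard * m := by
  refine Set.Finite.induction_on
    (motive := fun s _ => (∀ i ∈ s, (t i).encard ≤ m) → (⋃ i ∈ s, t i).encard ≤ s.encard * m)
    s hs (by simp) ?_
  intro a s ha hs ih ht
  rw [Set.biUnion_insert, Set.encard_insert_of_notMem ha]
  calc (t a ∪ ⋃ i ∈ s, t i).encard ≤ (t a).encard + (⋃ i ∈ s, t i).encard :=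
        Set.encard_union_le _ _
    _ ≤ m + s.encard * m := by
        gcongr
        · exact ht a (Set.mem_insert a s)
        · exact ih fun i hi => ht i (Set.mem_insert_of_mem a hi)
    _ = (s.encard + 1) * m := by ring

/-- Substitution: if `x_A` `n`-determines `x_B` and `x_C` `m`-determines `x_D`,
then `x_{(C \ B) ∪ A}` `nm`-determines `x_D`. -/
theorem determines_subst {V : Type*} [Fintype V] {F : V → Type*}
    (S : Set (∀ v, F v)) (A B C D : Set V) (n m : ℕ)
    (hAB : Determines S A B n) (hCD : Determines S C D m) :
    Determines S ((C \ B) ∪ A) D (n * m) := by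
  intro c
  classical
  set T : Set (∀ v, F v) := {x ∈ S | ∀ a : ((C \ B ∪ A : Set V)), x a = c a} with hT
  -- the set of B-projections from T
  set cA : ∀ a : A, F a := fun a => c ⟨a, Or.inr a.2⟩ with hcA
  set PB : Set (∀ b : B, F b) :=
    (fun x : ∀ v, F v => fun b : B => x b) '' T with hPB
  have hPBsub : PB ⊆ (fun x : ∀ v, F v => fun b : B => x b) ''
      {x ∈ S | ∀ a : A, x a = cA a} := by
    apply Set.image_mono
    rintro x ⟨hxS, hx⟩
    exact ⟨hxS, fun a => hx ⟨a, Or.inr a.2⟩⟩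
  have hPBcard : PB.encard ≤ (n : ℕ∞) :=
    le_trans (Set.encard_le_encard hPBsub) (hAB cA)
  -- from a B-value, build a C-value
  set cC : (∀ b : B, F b) → ∀ v : C, F v := fun b v =>
    if h : (v : V) ∈ B then b ⟨v, h⟩ else c ⟨v, Or.inl ⟨v.2, h⟩⟩ with hcC
  have hsub : (fun x : ∀ v, F v => fun d : D => x d) '' T ⊆
      ⋃ b ∈ PB, (fun x : ∀ v, F v => fun d : D => x d) ''
        {x ∈ S | ∀ a : C, x a = cC b a} := by
    rintro _ ⟨x, hx, rfl⟩
    refine Set.mem_biUnion (Set.mem_image_of_mem _ hx) ?_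
    refine Set.mem_image_of_mem _ ⟨hx.1, fun a => ?_⟩
    by_cases h : (a : V) ∈ B
    · simp [hcC, h]
    · simp only [hcC, h, dif_neg, not_false_iff]
      exact hx.2 ⟨a, Or.inl ⟨a.2, h⟩⟩
  calc ((fun x : ∀ v, F v => fun d : D => x d) '' T).encard
      ≤ (⋃ b ∈ PB, (fun x : ∀ v, F v => fun d : D => x d) ''
          {x ∈ S | ∀ a : C, x a = cC b a}).encard := Set.encard_le_encard hsub
    _ ≤ PB.encard * (m : ℕ∞) := by
        exact encard_biUnion_le_aux (Set.finite_of_encard_le_coe hPBcard)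
          fun b _ => hCD (cC b)
    _ ≤ (n : ℕ∞) * (m : ℕ∞) := by gcongr
    _ = ((n * m : ℕ) : ℕ∞) := by push_cast; ring
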